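/- Left multiplication and gcd: let c ∈ S, k ≥ 1 and u : Fin k → S. If d ∈ S is a greatest common divisor of the u i (i.e., d divides each u i and every common divisor of all the u i divides d) and e ∈ S is a greatest common divisor of the family i ↦ c * (u i), then e = c * d. -/
import Mathlib


open scoped BigOperators

/-- `u` divides `w` in `S`: `w ∈ u·S`. -/
def SDvd {G : Type*} [Group G] (S : Submonoid G) (u w : G) : Prop := ∃ s ∈ S, w = u * s

/-- The left set `u·S = {u * s : s ∈ S}`. -/
def leftSet {G : Type*} [Group G] (S : Submonoid G) (u : G) : Set G := {w | ∃ s ∈ S, w = u * s}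

/-- `τ(u)`: the number of ordered factorizations `u = v * w` with `v, w ∈ S`. -/
noncomputable def tau {G : Type*} [Group G] (S : Submonoid G) (u : G) : ℕ :=
  Set.ncard {p : G × G | p.1 ∈ S ∧ p.2 ∈ S ∧ p.1 * p.2 = u}

/-- An integral monoid: a submonoid of a group satisfying Axioms I, II, III. -/
structure IntegralMonoid {G : Type*} [Group G] (S : Submonoid G) : Prop where
  ax1 : ∀ u ∈ S, u⁻¹ ∈ S → u = 1
  ax2 : ∀ u : G, ∃ x ∈ S, ∃ y ∈ S, u = x * y⁻¹ ∧
        ∀ z ∈ S, ∀ w ∈ S, u = z * w⁻¹ → ∃ c ∈ S, z = x * c ∧ w = y * c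
  ax3 : ∀ u ∈ S, {p : G × G | p.1 ∈ S ∧ p.2 ∈ S ∧ p.1 * p.2 = u}.Finite

theorem gcd_mul_left_integralMonoid {G : Type*} [Group G] (S : Submonoid G) (hS : IntegralMonoid S)
    (c : G) (hc : c ∈ S) (k : ℕ) (hk : 1 ≤ k) (u : Fin k → G) (hu : ∀ i, u i ∈ S)
    (d : G) (hd : d ∈ S) (hd1 : ∀ i, SDvd S d (u i))
    (hd2 : ∀ e ∈ S, (∀ i, SDvd S e (u i)) → SDvd S e d)
    (e : G) (he : e ∈ S) (he1 : ∀ i, SDvd S e (c * u i))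
    (he2 : ∀ f ∈ S, (∀ i, SDvd S f (c * u i)) → SDvd S f e) :
    e = c * d := by
  obtain ⟨s, hs, hes⟩ := he2 (c * d) (S.mul_mem hc hd) (fun i => by
    obtain ⟨t, ht, hti⟩ := hd1 i
    exact ⟨t, ht, by rw [hti, mul_assoc]⟩)
  obtain ⟨r, hr, hdr⟩ := hd2 (d * s) (S.mul_mem hd hs) (fun i => by
    obtain ⟨t, ht, hti⟩ := he1 i
    refine ⟨t, ht, ?_⟩
    have : c * u i = c * (d * s * t) := by rw [hti, hes]; group
    exact mul_left_cancel this)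
  have hsr : s * r = 1 := by
    have : d * (s * r) = d * 1 := by rw [mul_one, ← mul_assoc, ← hdr]
    exact mul_left_cancel this
  have hsinv : s⁻¹ ∈ S := by
    rw [inv_eq_of_mul_eq_one_right hsr]; exact hr
  have : s = 1 := hS.ax1 s hs hsinv
  rw [hes, this, mul_one]
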